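/- arXiv:2202.05708 — 3 statements merged into one kernel-verified Lean document; each statement's English description precedes it below -/
import Mathlib

section
/- Let φ ∈ H^1(a,b) with φ(y₀) = 0 for some y₀ ∈ [a,b]. Then there is a constant C (depending only on (a,b)) such that ∫_a^b |φ(y)/(y−y₀)|² dy ≤ C ∫_a^b |φ'(y)|² dy. -/
open MeasureTheory Real Set

lemma sq_intervalIntegral_le (c e : ℝ) (hce : c ≤ e) (f : ℝ → ℝ)
    (hf : IntervalIntegrable f volume c e)
    (hf2 : IntervalIntegrable (fun y => f y ^ 2) volume c e) :
    (∫ y in c..e, f y) ^ 2 ≤ (e - c) * ∫ y in c..e, f y ^ 2 := by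
  rcases eq_or_lt_of_le hce with rfl | hlt
  · simp
  have hL0 : (0:ℝ) < e - c := by linarith
  set m := (∫ y in c..e, f y) / (e - c) with hm
  have hif : (∫ y in c..e, f y) = m * (e - c) := by rw [hm]; exact (div_mul_cancel₀ _ hL0.ne').symm
  have key : 0 ≤ ∫ y in c..e, (f y - m) ^ 2 :=
    intervalIntegral.integral_nonneg hce fun x _ => sq_nonneg _
  have expand : (∫ y in c..e, (f y - m) ^ 2)
      = (∫ y in c..e, f y ^ 2) - 2 * m * (∫ y in c..e, f y) + m ^ 2 * (e - c) := by
    have h1 : ∀ y, (f y - m) ^ 2 = (f y ^ 2 - (2 * m) * f y) + m ^ 2 := fun y => by ring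
    simp_rw [h1]
    rw [intervalIntegral.integral_add (hf2.sub (hf.const_mul (2*m))) intervalIntegrable_const,
      intervalIntegral.integral_sub hf2 (hf.const_mul (2*m)),
      intervalIntegral.integral_const_mul, intervalIntegral.integral_const]
    simp [smul_eq_mul]; ring
  rw [expand, hif] at key
  rw [hif]
  nlinarith [key, sq_nonneg m, hL0]


lemma hardy_aux (c d : ℝ) (hcd : c ≤ d) (φ dφ : ℝ → ℝ)
    (hderiv : ∀ y, HasDerivAt φ (dφ y) y) (h0 : φ c = 0)
    (hint : IntervalIntegrable (fun y => dφ y ^ 2) volume c d) :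
    IntervalIntegrable (fun y => (φ y / (y - c)) ^ 2) volume c d ∧
      (∫ y in c..d, (φ y / (y - c)) ^ 2) ≤ 6 * ∫ y in c..d, dφ y ^ 2 := by
  rcases eq_or_lt_of_le hcd with rfl | hlt
  · simp [IntervalIntegrable.refl]
  have φcont : Continuous φ := continuous_iff_continuousAt.mpr fun y => (hderiv y).continuousAt
  have hdm : Measurable dφ := by
    have h : dφ = deriv φ := funext fun y => ((hderiv y).deriv).symm
    rw [h]; exact measurable_deriv φ
  -- dφ is interval integrable (L² ⊆ L¹ on bounded interval)
  have hdφint : IntervalIntegrable dφ volume c d := by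
    have hg : IntervalIntegrable (fun y => (dφ y ^ 2 + 1) / 2) volume c d :=
      (hint.add (intervalIntegrable_const (c := (1:ℝ)))).div_const 2
    apply IntervalIntegrable.mono_fun' hg hdm.aestronglyMeasurable
    refine Filter.Eventually.of_forall fun x => ?_
    simp only [Real.norm_eq_abs]
    nlinarith [sq_nonneg (|dφ x| - 1), abs_nonneg (dφ x), sq_abs (dφ x)]
  set A := ∫ y in c..d, dφ y ^ 2 with hA
  have hA0 : 0 ≤ A := intervalIntegral.integral_nonneg hcd fun x _ => sq_nonneg _
  -- partial L² integrals are bounded by A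
  have hpartial : ∀ x₁ x₂ : ℝ, c ≤ x₁ → x₁ ≤ x₂ → x₂ ≤ d →
      (∫ y in x₁..x₂, dφ y ^ 2) ≤ A := by
    intro x₁ x₂ h1 h2 h3
    have m1 : IntervalIntegrable (fun y => dφ y ^ 2) volume c x₁ :=
      hint.mono_set (by rw [uIcc_of_le h1, uIcc_of_le hcd]; exact Icc_subset_Icc le_rfl (h2.trans h3))
    have m2 : IntervalIntegrable (fun y => dφ y ^ 2) volume x₁ x₂ :=
      hint.mono_set (by rw [uIcc_of_le h2, uIcc_of_le hcd]; exact Icc_subset_Icc h1 h3)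
    have m3 : IntervalIntegrable (fun y => dφ y ^ 2) volume x₂ d :=
      hint.mono_set (by rw [uIcc_of_le h3, uIcc_of_le hcd]; exact Icc_subset_Icc (h1.trans h2) le_rfl)
    have e1 := intervalIntegral.integral_add_adjacent_intervals m1 m2
    have e2 := intervalIntegral.integral_add_adjacent_intervals (m1.trans m2) m3
    have n1 : 0 ≤ ∫ y in c..x₁, dφ y ^ 2 := intervalIntegral.integral_nonneg h1 fun x _ => sq_nonneg _
    have n3 : 0 ≤ ∫ y in x₂..d, dφ y ^ 2 := intervalIntegral.integral_nonneg h3 fun x _ => sq_nonneg _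
    rw [hA]; linarith [e1, e2]
  -- pointwise bound from FTC + Cauchy-Schwarz
  have hsq : ∀ x, c ≤ x → x ≤ d → φ x ^ 2 ≤ (x - c) * A := by
    intro x h1 h2
    have hsub : IntervalIntegrable dφ volume c x :=
      hdφint.mono_set (by rw [uIcc_of_le h1, uIcc_of_le hcd]; exact Icc_subset_Icc le_rfl h2)
    have hsub2 : IntervalIntegrable (fun y => dφ y ^ 2) volume c x :=
      hint.mono_set (by rw [uIcc_of_le h1, uIcc_of_le hcd]; exact Icc_subset_Icc le_rfl h2)
    have ftc : (∫ t in c..x, dφ t) = φ x - φ c :=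
      intervalIntegral.integral_eq_sub_of_hasDerivAt (fun t _ => hderiv t) hsub
    have cs := sq_intervalIntegral_le c x h1 dφ hsub hsub2
    rw [ftc, h0, sub_zero] at cs
    calc φ x ^ 2 ≤ (x - c) * ∫ t in c..x, dφ t ^ 2 := cs
      _ ≤ (x - c) * A := by
          apply mul_le_mul_of_nonneg_left (hpartial c x le_rfl h1 h2) (by linarith)
  -- the truncated Hardy bound via integration by parts
  have hXe : ∀ e, c < e → e ≤ d → (∫ y in e..d, (φ y / (y - c)) ^ 2) ≤ 6 * A := by
    intro e hce hed
    have hne : ∀ x ∈ uIcc e d, x ≠ c := by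
      intro x hx
      rw [uIcc_of_le hed] at hx
      exact ne_of_gt (lt_of_lt_of_le hce hx.1)
    have hu : ∀ x ∈ uIcc e d, HasDerivAt (fun y => φ y ^ 2) (2 * φ x * dφ x) x := by
      intro x _
      have := (hderiv x).pow 2
      exact this.congr_deriv (by simp)
    have hv : ∀ x ∈ uIcc e d, HasDerivAt (fun y => -(y - c)⁻¹) (((x - c) ^ 2)⁻¹) x := by
      intro x hx
      have h1 : HasDerivAt (fun y : ℝ => y - c) 1 x := (hasDerivAt_id x).sub_const c
      have h2 := (h1.inv (sub_ne_zero.mpr (hne x hx))).neg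
      exact h2.congr_deriv (by rw [neg_div, neg_neg, one_div])
    have hcsub : uIcc e d ⊆ uIcc c d := by
      rw [uIcc_of_le hed, uIcc_of_le hcd]; exact Icc_subset_Icc hce.le le_rfl
    have hu' : IntervalIntegrable (fun y => 2 * φ y * dφ y) volume e d :=
      (hdφint.mono_set hcsub).continuousOn_mul ((continuous_const.mul φcont).continuousOn)
    have hv' : IntervalIntegrable (fun y => ((y - c) ^ 2)⁻¹) volume e d := by
      apply ContinuousOn.intervalIntegrable
      exact (((continuous_id.sub continuous_const).pow 2).continuousOn).inv₀
        fun x hx => pow_ne_zero _ (sub_ne_zero.mpr (hne x hx))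
    have ibp := intervalIntegral.integral_mul_deriv_eq_deriv_mul hu hv hu' hv'
    have lhs_eq : (∫ y in e..d, (φ y / (y - c)) ^ 2) = ∫ y in e..d, φ y ^ 2 * ((y - c) ^ 2)⁻¹ := by
      congr 1; funext y; rw [div_pow, div_eq_mul_inv]
    set X := ∫ y in e..d, (φ y / (y - c)) ^ 2 with hX
    -- the cross term
    have hcross : IntervalIntegrable (fun y => 2 * φ y * dφ y * (y - c)⁻¹) volume e d := by
      apply hu'.mul_continuousOn
      exact ((continuous_id.sub continuous_const).continuousOn).inv₀
        fun x hx => sub_ne_zero.mpr (hne x hx)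
    have hXint : IntervalIntegrable (fun y => (φ y / (y - c)) ^ 2) volume e d := by
      apply ContinuousOn.intervalIntegrable
      exact ((φcont.continuousOn.div ((continuous_id.sub continuous_const).continuousOn)
        fun x hx => sub_ne_zero.mpr (hne x hx)).pow 2)
    have hdint2 : IntervalIntegrable (fun y => dφ y ^ 2) volume e d := hint.mono_set hcsub
    have cross_le : (∫ y in e..d, 2 * φ y * dφ y * (y - c)⁻¹)
        ≤ (1/2) * X + 2 * ∫ y in e..d, dφ y ^ 2 := by
      have hrhsint : IntervalIntegrable
          (fun y => (1/2) * (φ y / (y - c)) ^ 2 + 2 * dφ y ^ 2) volume e d :=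
        (hXint.const_mul _).add (hdint2.const_mul _)
      have hmono := intervalIntegral.integral_mono_on hed hcross hrhsint ?_
      · rw [intervalIntegral.integral_add (hXint.const_mul _) (hdint2.const_mul _),
          intervalIntegral.integral_const_mul, intervalIntegral.integral_const_mul] at hmono
        exact hmono
      · intro x _
        have hpq : 2 * φ x * dφ x * (x - c)⁻¹ = 2 * (φ x / (x - c)) * dφ x := by
          rw [div_eq_mul_inv]; ring
        rw [hpq]
        nlinarith [sq_nonneg (φ x / (x - c) - 2 * dφ x)]
    -- boundary terms
    have hbd1 : φ d ^ 2 * -(d - c)⁻¹ ≤ 0 := by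
      have : (0:ℝ) ≤ (d - c)⁻¹ := inv_nonneg.mpr (by linarith)
      nlinarith [sq_nonneg (φ d)]
    have hbd2 : -(φ e ^ 2 * -(e - c)⁻¹) ≤ A := by
      have hec : (0:ℝ) < e - c := by linarith
      have h1 := hsq e hce.le hed
      have h2' : φ e ^ 2 * (e - c)⁻¹ ≤ (e - c) * A * (e - c)⁻¹ :=
        mul_le_mul_of_nonneg_right h1 (inv_nonneg.mpr hec.le)
      have h3' : (e - c) * A * (e - c)⁻¹ = A := by field_simp
      simp only [mul_neg, neg_neg]
      linarith
    have negint : (∫ x in e..d, 2 * φ x * dφ x * -(x - c)⁻¹)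
        = -∫ x in e..d, 2 * φ x * dφ x * (x - c)⁻¹ := by
      rw [← intervalIntegral.integral_neg]
      congr 1; funext x; ring
    have hpart : (∫ y in e..d, dφ y ^ 2) ≤ A := hpartial e d hce.le hed le_rfl
    rw [lhs_eq, ibp, negint]
    linarith
  -- limiting argument
  set f : ℝ → ℝ := fun y => (φ y / (y - c)) ^ 2 with hf
  set an : ℕ → ℝ := fun n => c + (d - c) / (n + 1) with han
  have hanp : ∀ n : ℕ, c < an n ∧ an n ≤ d := by
    intro n
    have hn1 : (0:ℝ) < (n:ℝ) + 1 := by positivity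
    constructor
    · have : (0:ℝ) < (d - c) / ((n:ℝ) + 1) := div_pos (by linarith) hn1
      simp only [han]; linarith
    · have : (d - c) / ((n:ℝ) + 1) ≤ (d - c) / 1 := by
        apply div_le_div_of_nonneg_left (by linarith) one_pos (by linarith)
      simp only [han]
      have : (d - c) / ((n:ℝ) + 1) ≤ d - c := by simpa using this
      linarith
  have hatend : Filter.Tendsto an Filter.atTop (nhds c) := by
    have h1 : Filter.Tendsto (fun n : ℕ => ((n:ℝ) + 1)) Filter.atTop Filter.atTop :=
      Filter.tendsto_atTop_add_const_right _ 1 tendsto_natCast_atTop_atTop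
    have h2 : Filter.Tendsto (fun n : ℕ => (d - c) / ((n:ℝ) + 1)) Filter.atTop (nhds 0) :=
      Filter.Tendsto.div_atTop tendsto_const_nhds h1
    have := Filter.Tendsto.const_add c h2
    simpa using this
  have hfcont : ∀ n : ℕ, ContinuousOn f (Icc (an n) d) := by
    intro n
    apply ContinuousOn.pow
    apply φcont.continuousOn.div ((continuous_id.sub continuous_const).continuousOn)
    intro x hx
    exact sub_ne_zero.mpr (ne_of_gt (lt_of_lt_of_le (hanp n).1 hx.1))
  have hfi : ∀ n : ℕ, IntegrableOn f (Ioc (an n) d) := fun n =>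
    ((hfcont n).integrableOn_Icc).mono_set Ioc_subset_Icc_self
  have hbound : ∀ n : ℕ, (∫ x in Ioc (an n) d, ‖f x‖) ≤ 6 * A := by
    intro n
    have heq : ∀ x, ‖f x‖ = f x := fun x => Real.norm_of_nonneg (sq_nonneg _)
    simp_rw [heq]
    rw [← intervalIntegral.integral_of_le (hanp n).2]
    exact hXe (an n) (hanp n).1 (hanp n).2
  have hIoc : IntegrableOn f (Ioc c d) :=
    integrableOn_Ioc_of_intervalIntegral_norm_bounded_left hfi hatend
      (Filter.Eventually.of_forall hbound)
  have hII : IntervalIntegrable f volume c d := by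
    rw [intervalIntegrable_iff_integrableOn_Ioc_of_le hcd]; exact hIoc
  refine ⟨hII, ?_⟩
  have hmono : Monotone fun n : ℕ => Ioc (an n) d := by
    intro n m hnm
    apply Ioc_subset_Ioc_left
    simp only [han]
    have h1 : ((n:ℝ) + 1) ≤ ((m:ℝ) + 1) := by exact_mod_cast by omega
    have := div_le_div_of_nonneg_left (by linarith : (0:ℝ) ≤ d - c) (by positivity : (0:ℝ) < (n:ℝ)+1) h1
    linarith
  have hunion : (⋃ n : ℕ, Ioc (an n) d) = Ioc c d := by
    ext x
    simp only [mem_iUnion, mem_Ioc]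
    constructor
    · rintro ⟨n, hn1, hn2⟩
      exact ⟨lt_trans (hanp n).1 hn1, hn2⟩
    · rintro ⟨hx1, hx2⟩
      obtain ⟨N, hN⟩ := exists_nat_gt ((d - c) / (x - c))
      refine ⟨N, ?_, hx2⟩
      have hxc : (0:ℝ) < x - c := by linarith
      have hN1 : (d - c) / (x - c) < (N:ℝ) + 1 := by linarith
      have : d - c < (x - c) * ((N:ℝ) + 1) := by
        rwa [div_lt_iff₀ hxc, mul_comm] at hN1
      have hdiv : (d - c) / ((N:ℝ) + 1) < x - c := by
        rw [div_lt_iff₀ (by positivity : (0:ℝ) < (N:ℝ)+1)]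
        linarith
      simp only [han]; linarith
  have htend := tendsto_setIntegral_of_monotone (fun n : ℕ => measurableSet_Ioc) hmono
    (hunion ▸ hIoc)
  rw [hunion] at htend
  have hle : ∀ n : ℕ, (∫ x in Ioc (an n) d, f x) ≤ 6 * A := by
    intro n
    rw [← intervalIntegral.integral_of_le (hanp n).2]
    exact hXe (an n) (hanp n).1 (hanp n).2
  have := le_of_tendsto htend (Filter.Eventually.of_forall hle)
  rwa [intervalIntegral.integral_of_le hcd]


/-- Hardy type inequality: if `φ ∈ H¹(a,b)` vanishes at some `y₀ ∈ [a,b]`, then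
`∫_a^b |φ/(y-y₀)|² ≤ C ∫_a^b |φ'|²` with `C` depending only on `(a,b)`. -/
theorem hardy_type_inequality (a b : ℝ) (hab : a < b) :
    ∃ C > 0, ∀ (φ dφ : ℝ → ℝ) (y₀ : ℝ), y₀ ∈ Set.Icc a b →
      (∀ y, HasDerivAt φ (dφ y) y) → φ y₀ = 0 →
      IntervalIntegrable (fun y => dφ y ^ 2) volume a b →
      (∫ y in a..b, (φ y / (y - y₀)) ^ 2) ≤ C * ∫ y in a..b, dφ y ^ 2 := by
  refine ⟨6, by norm_num, ?_⟩
  intro φ dφ y₀ hy₀ hderiv h0 hI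
  obtain ⟨hay, hyb⟩ := hy₀
  have hIl : IntervalIntegrable (fun y => dφ y ^ 2) volume a y₀ :=
    hI.mono_set (by rw [uIcc_of_le hay, uIcc_of_le hab.le]; exact Icc_subset_Icc le_rfl hyb)
  have hIr : IntervalIntegrable (fun y => dφ y ^ 2) volume y₀ b :=
    hI.mono_set (by rw [uIcc_of_le hyb, uIcc_of_le hab.le]; exact Icc_subset_Icc hay le_rfl)
  -- right piece
  obtain ⟨int_r, le_r⟩ := hardy_aux y₀ b hyb φ dφ hderiv h0 hIr
  -- left piece via reflection
  have hψderiv : ∀ t, HasDerivAt (fun t => φ (-t)) (-dφ (-t)) t := by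
    intro t
    have h1 : HasDerivAt (fun s : ℝ => -s) (-1 : ℝ) t := (hasDerivAt_id t).neg
    have h2 := HasDerivAt.comp t (hderiv (-t)) h1
    exact h2.congr_deriv (by ring)
  have hintψ : IntervalIntegrable (fun t => (-dφ (-t)) ^ 2) volume (-y₀) (-a) := by
    have h1 : IntervalIntegrable (fun x => dφ (-x) ^ 2) volume (-a) (-y₀) :=
      (IntervalIntegrable.iff_comp_neg (f := fun y => dφ y ^ 2)).mp hIl
    have heq : (fun t : ℝ => (-dφ (-t)) ^ 2) = fun x => dφ (-x) ^ 2 :=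
      funext fun t => by ring
    rw [heq]
    exact h1.symm
  obtain ⟨int_l', le_l'⟩ := hardy_aux (-y₀) (-a) (neg_le_neg hay) (fun t => φ (-t))
    (fun t => -dφ (-t)) hψderiv (by simpa using h0) hintψ
  have heqF : (fun x : ℝ => (φ (-x) / (-x - y₀)) ^ 2)
      = fun t : ℝ => ((fun t => φ (-t)) t / (t - -y₀)) ^ 2 := by
    funext x
    have h1 : -x - y₀ = -(x - -y₀) := by ring
    rw [h1, div_neg, neg_sq]
  have int_l : IntervalIntegrable (fun y => (φ y / (y - y₀)) ^ 2) volume a y₀ := by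
    apply (IntervalIntegrable.iff_comp_neg
      (f := fun y => (φ y / (y - y₀)) ^ 2) (a := a) (b := y₀)).mpr
    rw [heqF]
    exact int_l'.symm
  have hIl_eq : (∫ y in a..y₀, (φ y / (y - y₀)) ^ 2)
      = ∫ t in (-y₀)..(-a), ((fun t => φ (-t)) t / (t - -y₀)) ^ 2 := by
    rw [← heqF, intervalIntegral.integral_comp_neg (fun y => (φ y / (y - y₀)) ^ 2)]
    norm_num
  have hdl_eq : (∫ y in a..y₀, dφ y ^ 2) = ∫ t in (-y₀)..(-a), (-dφ (-t)) ^ 2 := by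
    have heq2 : (fun t : ℝ => (-dφ (-t)) ^ 2) = fun t : ℝ => dφ (-t) ^ 2 :=
      funext fun t => by ring
    rw [heq2, intervalIntegral.integral_comp_neg (fun y => dφ y ^ 2)]
    norm_num
  have split1 := intervalIntegral.integral_add_adjacent_intervals int_l int_r
  have split2 := intervalIntegral.integral_add_adjacent_intervals hIl hIr
  linarith [le_l', le_r, hIl_eq, hdl_eq, split1, split2]
end

section
/- The function β ↦ λ₁(β,−1) is continuous on [0,∞), where λ₁(β,−1) = inf { ∫_{−1}^1 (|φ'|² − (β/(y+1))|φ|²) dy : φ ∈ H₀¹(−1,1), ‖φ‖_{L²} = 1 }. -/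
open MeasureTheory Real Set Filter

/-- The set of values of the Rayleigh–Kuo quadratic form
`∫_{-1}^1 (|φ'|² - (β/(y-c))|φ|²) dy` over `L²`-normalized `φ ∈ H₀¹(-1,1)`. -/
noncomputable def rayleighSet (β c : ℝ) : Set ℝ :=
  { r | ∃ φ dφ : ℝ → ℝ,
      (∀ y, HasDerivAt φ (dφ y) y) ∧ φ (-1) = 0 ∧ φ 1 = 0 ∧
      IntervalIntegrable (fun y => dφ y ^ 2) volume (-1) 1 ∧
      IntervalIntegrable (fun y => β / (y - c) * φ y ^ 2) volume (-1) 1 ∧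
      (∫ y in (-1:ℝ)..1, φ y ^ 2) = 1 ∧
      r = ∫ y in (-1:ℝ)..1, (dφ y ^ 2 - β / (y - c) * φ y ^ 2) }

/-- The principal eigenvalue `λ₁(β,c)` of the Rayleigh–Kuo boundary value problem,
defined variationally as the infimum of the quadratic form. -/
noncomputable def lambda1 (β c : ℝ) : ℝ := sInf (rayleighSet β c)

/-- interval Cauchy-Schwarz -/
lemma sq_intInt_le {f : ℝ → ℝ} {a b : ℝ} (hab : a ≤ b)
    (hf : IntervalIntegrable f volume a b)
    (hf2 : IntervalIntegrable (fun y => f y ^ 2) volume a b) :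
    (∫ y in a..b, f y) ^ 2 ≤ (b - a) * ∫ y in a..b, f y ^ 2 := by
  rcases eq_or_lt_of_le hab with rfl | h
  · simp
  have hm0 : 0 < b - a := by linarith
  set I := ∫ y in a..b, f y with hI
  set t : ℝ := I / (b - a) with ht
  have key : 0 ≤ ∫ y in a..b, (f y - t) ^ 2 :=
    intervalIntegral.integral_nonneg hab (fun x _ => sq_nonneg _)
  have expand : ∫ y in a..b, (f y - t) ^ 2
      = (∫ y in a..b, f y ^ 2) - 2 * t * I + t ^ 2 * (b - a) := by
    have h1 : (fun y => (f y - t) ^ 2)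
        = fun y => (f y ^ 2 - 2 * t * f y) + t ^ 2 := by
      funext y; ring
    rw [h1, intervalIntegral.integral_add (hf2.sub (hf.const_mul (2 * t)))
          intervalIntegrable_const,
        intervalIntegral.integral_sub hf2 (hf.const_mul (2 * t)),
        intervalIntegral.integral_const_mul, intervalIntegral.integral_const]
    simp [smul_eq_mul]; ring
  rw [expand] at key
  have e1 : t * (b - a) = I := div_mul_cancel₀ _ (ne_of_gt hm0)
  have e2 : (b - a) * ((∫ y in a..b, f y ^ 2) - 2 * t * I + t ^ 2 * (b - a))
      = (b - a) * (∫ y in a..b, f y ^ 2) - 2 * I * I + I * I := by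
    rw [← e1]; ring
  have e3 := mul_nonneg hm0.le key
  rw [e2] at e3
  nlinarith [e3]

/-- Admissible pairs for the Rayleigh quotient on (-1,1). -/
def Adm (φ dφ : ℝ → ℝ) : Prop :=
  (∀ y, HasDerivAt φ (dφ y) y) ∧ φ (-1) = 0 ∧ φ 1 = 0 ∧
  IntervalIntegrable (fun y => dφ y ^ 2) volume (-1) 1 ∧
  (∫ y in (-1:ℝ)..1, φ y ^ 2) = 1

noncomputable def rsA (dφ : ℝ → ℝ) : ℝ := ∫ y in (-1:ℝ)..1, dφ y ^ 2
noncomputable def rsB (φ : ℝ → ℝ) : ℝ := ∫ y in (-1:ℝ)..1, φ y ^ 2 / (y + 1)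

lemma Adm.contphi {φ dφ : ℝ → ℝ} (h : Adm φ dφ) : Continuous φ :=
  continuous_iff_continuousAt.2 fun y => (h.1 y).continuousAt

lemma Adm.dphi_meas {φ dφ : ℝ → ℝ} (h : Adm φ dφ) : Measurable dφ := by
  have : dφ = deriv φ := funext fun y => ((h.1 y).deriv).symm
  rw [this]; exact measurable_deriv φ

lemma Adm.dphi_int {φ dφ : ℝ → ℝ} (h : Adm φ dφ) :
    IntervalIntegrable dφ volume (-1) 1 := by
  refine IntervalIntegrable.mono_fun'
    ((intervalIntegrable_const (c := (1:ℝ)/2)).add (h.2.2.2.1.div_const 2)) ?_ ?_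
  · exact (h.dphi_meas.aestronglyMeasurable).restrict
  · refine Eventually.of_forall fun y => ?_
    have : |dφ y| ≤ 1/2 + dφ y ^ 2 / 2 := by nlinarith [sq_nonneg (|dφ y| - 1), sq_abs (dφ y)]
    simpa [Real.norm_eq_abs] using this

lemma Adm.A_nonneg {φ dφ : ℝ → ℝ} (h : Adm φ dφ) : 0 ≤ rsA dφ :=
  intervalIntegral.integral_nonneg (by norm_num) fun x _ => sq_nonneg _

lemma Adm.pointwise {φ dφ : ℝ → ℝ} (h : Adm φ dφ) {y : ℝ} (hy : y ∈ Icc (-1:ℝ) 1) :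
    φ y ^ 2 ≤ (y + 1) * rsA dφ := by
  obtain ⟨hy1, hy2⟩ := hy
  have hsub : Set.uIcc (-1:ℝ) y ⊆ Set.uIcc (-1:ℝ) 1 := by
    rw [Set.uIcc_of_le hy1, Set.uIcc_of_le (by norm_num : (-1:ℝ) ≤ 1)]
    exact Icc_subset_Icc le_rfl hy2
  have hsub' : Set.uIoc (-1:ℝ) y ⊆ Set.uIoc (-1:ℝ) 1 := by
    rw [Set.uIoc_of_le hy1, Set.uIoc_of_le (by norm_num : (-1:ℝ) ≤ 1)]
    exact Ioc_subset_Ioc le_rfl hy2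
  have hdi : IntervalIntegrable dφ volume (-1) y := h.dphi_int.mono_set' hsub'
  have hdi2 : IntervalIntegrable (fun t => dφ t ^ 2) volume (-1) y :=
    h.2.2.2.1.mono_set' hsub'
  have hftc : ∫ t in (-1:ℝ)..y, dφ t = φ y - φ (-1) :=
    intervalIntegral.integral_eq_sub_of_hasDerivAt (fun t _ => h.1 t) hdi
  have hphiy : φ y = ∫ t in (-1:ℝ)..y, dφ t := by rw [hftc, h.2.1, sub_zero]
  have hcs := sq_intInt_le hy1 hdi hdi2
  have hmono : (∫ t in (-1:ℝ)..y, dφ t ^ 2) ≤ rsA dφ := by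
    refine intervalIntegral.integral_mono_interval le_rfl hy1 hy2 ?_ h.2.2.2.1
    exact Eventually.of_forall fun x => sq_nonneg _
  rw [hphiy]
  calc (∫ t in (-1:ℝ)..y, dφ t) ^ 2 ≤ (y - (-1)) * ∫ t in (-1:ℝ)..y, dφ t ^ 2 := hcs
    _ ≤ (y + 1) * rsA dφ := by
        have : (0:ℝ) ≤ y + 1 := by linarith
        rw [show y - (-1) = y + 1 by ring]
        exact mul_le_mul_of_nonneg_left hmono this

lemma Adm.V_int {φ dφ : ℝ → ℝ} (h : Adm φ dφ) {a b : ℝ}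
    (ha : -1 ≤ a) (hab : a ≤ b) (hb : b ≤ 1) :
    IntervalIntegrable (fun y => φ y ^ 2 / (y + 1)) volume a b := by
  refine IntervalIntegrable.mono_fun' (g := fun _ => rsA dφ) intervalIntegrable_const ?_ ?_
  · exact ((h.contphi.pow 2).measurable.div
      ((measurable_id.add_const 1))).aestronglyMeasurable.restrict
  · rw [Set.uIoc_of_le hab]
    refine (ae_restrict_iff' measurableSet_Ioc).2 (Eventually.of_forall fun y hy => ?_)
    obtain ⟨hy1, hy2⟩ := hy
    have hy1' : -1 < y := lt_of_le_of_lt ha hy1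
    have hyp : 0 < y + 1 := by linarith
    have hpt : φ y ^ 2 ≤ (y + 1) * rsA dφ := h.pointwise ⟨hy1'.le, le_trans hy2 hb⟩
    have : φ y ^ 2 / (y + 1) ≤ rsA dφ := by
      rw [div_le_iff₀ hyp]; linarith [hpt]
    have hnn : 0 ≤ φ y ^ 2 / (y + 1) := div_nonneg (sq_nonneg _) hyp.le
    simp only [Real.norm_eq_abs]
    rw [abs_of_nonneg hnn]; exact this

lemma Adm.B_nonneg {φ dφ : ℝ → ℝ} (h : Adm φ dφ) : 0 ≤ rsB φ := by
  refine intervalIntegral.integral_nonneg (by norm_num) fun y hy => ?_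
  exact div_nonneg (sq_nonneg _) (by linarith [hy.1])

lemma Adm.B_le {φ dφ : ℝ → ℝ} (h : Adm φ dφ) {δ : ℝ} (hδ0 : 0 < δ) (hδ2 : δ ≤ 2) :
    rsB φ ≤ δ * rsA dφ + 1 / δ := by
  set c : ℝ := -1 + δ with hc
  have hc1 : -1 ≤ c := by simp [hc]; linarith
  have hc2 : c ≤ 1 := by simp [hc]; linarith
  have hInt1 : IntervalIntegrable (fun y => φ y ^ 2 / (y + 1)) volume (-1) c :=
    h.V_int le_rfl hc1 hc2
  have hInt2 : IntervalIntegrable (fun y => φ y ^ 2 / (y + 1)) volume c 1 :=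
    h.V_int hc1 hc2 le_rfl
  have hsplit : rsB φ = (∫ y in (-1:ℝ)..c, φ y ^ 2 / (y + 1))
      + ∫ y in c..(1:ℝ), φ y ^ 2 / (y + 1) :=
    (intervalIntegral.integral_add_adjacent_intervals hInt1 hInt2).symm
  have hφ2int : IntervalIntegrable (fun y => φ y ^ 2) volume (-1) 1 :=
    (h.contphi.pow 2).intervalIntegrable _ _
  have hp1 : (∫ y in (-1:ℝ)..c, φ y ^ 2 / (y + 1)) ≤ δ * rsA dφ := by
    have hmono : (∫ y in (-1:ℝ)..c, φ y ^ 2 / (y + 1))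
        ≤ ∫ _ in (-1:ℝ)..c, rsA dφ := by
      refine intervalIntegral.integral_mono_on hc1 hInt1 intervalIntegrable_const
        fun y hy => ?_
      rcases eq_or_lt_of_le hy.1 with rfl | hlt
      · simp [h.2.1]; exact h.A_nonneg
      · have hyp : 0 < y + 1 := by linarith
        have hpt : φ y ^ 2 ≤ (y + 1) * rsA dφ :=
          h.pointwise ⟨hlt.le, le_trans hy.2 hc2⟩
        rw [div_le_iff₀ hyp]; linarith
    have hconst : (∫ _ in (-1:ℝ)..c, rsA dφ) = δ * rsA dφ := by
      rw [intervalIntegral.integral_const, smul_eq_mul, hc]; ring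
    exact le_of_le_of_eq hmono hconst
  have hp2 : (∫ y in c..(1:ℝ), φ y ^ 2 / (y + 1)) ≤ 1 / δ := by
    have step1 : (∫ y in c..(1:ℝ), φ y ^ 2 / (y + 1))
        ≤ ∫ y in c..(1:ℝ), φ y ^ 2 / δ := by
      refine intervalIntegral.integral_mono_on hc2 hInt2
        ((hφ2int.mono_set' (by
          rw [Set.uIoc_of_le hc2, Set.uIoc_of_le (by norm_num : (-1:ℝ) ≤ 1)]
          exact Ioc_subset_Ioc hc1 le_rfl)).div_const δ) fun y hy => ?_
      have hle : δ ≤ y + 1 := by have := hy.1; simp [hc] at this; linarith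
      exact div_le_div_of_nonneg_left (sq_nonneg _) hδ0 hle
    have step2 : (∫ y in c..(1:ℝ), φ y ^ 2 / δ) = (∫ y in c..(1:ℝ), φ y ^ 2) / δ :=
      intervalIntegral.integral_div _ _
    have step3 : (∫ y in c..(1:ℝ), φ y ^ 2) ≤ 1 := by
      have hm := intervalIntegral.integral_mono_interval hc1 hc2 le_rfl
        (Eventually.of_forall fun x => sq_nonneg (φ x)) hφ2int
      linarith [h.2.2.2.2, hm]
    calc (∫ y in c..(1:ℝ), φ y ^ 2 / (y + 1)) ≤ (∫ y in c..(1:ℝ), φ y ^ 2) / δ := by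
          rw [← step2]; exact step1
      _ ≤ 1 / δ := (div_le_div_iff_of_pos_right hδ0).2 step3
  rw [hsplit]; linarith [hp1, hp2]

noncomputable def phi0 : ℝ → ℝ := fun y => Real.sqrt 15 / 4 * (1 - y ^ 2)
noncomputable def dphi0 : ℝ → ℝ := fun y => Real.sqrt 15 / 4 * (-(2 * y))

lemma adm_phi0 : Adm phi0 dphi0 := by
  have hderiv : ∀ y, HasDerivAt phi0 (dphi0 y) y := by
    intro y
    have h1 : HasDerivAt (fun x : ℝ => (1:ℝ) - x ^ 2) (-(2 * y)) y := by
      simpa using (hasDerivAt_pow 2 y).const_sub 1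
    unfold phi0 dphi0; simpa using h1.const_mul (Real.sqrt 15 / 4)
  have hsq : Real.sqrt 15 ^ 2 = 15 := Real.sq_sqrt (by norm_num)
  have hcont : Continuous phi0 := by
    unfold phi0; continuity
  refine ⟨hderiv, by simp [phi0], by simp [phi0], ?_, ?_⟩
  · have : Continuous dphi0 := by unfold dphi0; continuity
    exact (this.pow 2).intervalIntegrable _ _
  · have hF : ∀ y ∈ Set.uIcc (-1:ℝ) 1,
        HasDerivAt (fun x : ℝ => (15:ℝ)/16 * (x - 2 * x ^ 3 / 3 + x ^ 5 / 5)) (phi0 y ^ 2) y := by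
      intro y _
      have h1 : HasDerivAt (fun x : ℝ => x - 2 * x ^ 3 / 3 + x ^ 5 / 5)
          (1 - 2 * (3 * y ^ 2) / 3 + 5 * y ^ 4 / 5) y := by
        exact (((hasDerivAt_id y).sub (((hasDerivAt_pow 3 y).const_mul 2).div_const 3)).add
          ((hasDerivAt_pow 5 y).div_const 5)).congr_deriv (by ring_nf)
      have := h1.const_mul ((15:ℝ)/16)
      refine this.congr_deriv ?_; symm
      show (Real.sqrt 15 / 4 * (1 - y ^ 2)) ^ 2 = _
      rw [mul_pow, div_pow, hsq]
      ring
    have hint : IntervalIntegrable (fun y => phi0 y ^ 2) volume (-1) 1 :=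
      ((hcont.pow 2)).intervalIntegrable _ _
    rw [intervalIntegral.integral_eq_sub_of_hasDerivAt hF hint]
    norm_num


lemma mem_rayleigh_iff {β r : ℝ} :
    r ∈ rayleighSet β (-1) ↔ ∃ φ dφ : ℝ → ℝ, Adm φ dφ ∧ r = rsA dφ - β * rsB φ := by
  constructor
  · rintro ⟨φ, dφ, hd, hb1, hb2, hA, hV, hnorm, hr⟩
    refine ⟨φ, dφ, ⟨hd, hb1, hb2, hA, hnorm⟩, ?_⟩
    have hfun : (fun y => β / (y - (-1)) * φ y ^ 2)
        = fun y => β * (φ y ^ 2 / (y + 1)) := by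
      funext y; rw [sub_neg_eq_add]; ring
    rw [hr, intervalIntegral.integral_sub hA hV, rsA]
    congr 1
    rw [hfun, intervalIntegral.integral_const_mul, rsB]
  · rintro ⟨φ, dφ, hAdm, hr⟩
    have hfun : (fun y => β / (y - (-1)) * φ y ^ 2)
        = fun y => β * (φ y ^ 2 / (y + 1)) := by
      funext y; rw [sub_neg_eq_add]; ring
    have hVβ : IntervalIntegrable (fun y => β / (y - (-1)) * φ y ^ 2) volume (-1) 1 := by
      rw [hfun]
      exact (hAdm.V_int le_rfl (by norm_num) le_rfl).const_mul β
    refine ⟨φ, dφ, hAdm.1, hAdm.2.1, hAdm.2.2.1, hAdm.2.2.2.1, hVβ, hAdm.2.2.2.2, ?_⟩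
    rw [intervalIntegral.integral_sub hAdm.2.2.2.1 hVβ, hr, rsA]
    congr 1
    rw [hfun, intervalIntegral.integral_const_mul, rsB]

lemma rayleigh_nonempty (β : ℝ) : (rayleighSet β (-1)).Nonempty :=
  ⟨_, mem_rayleigh_iff.2 ⟨phi0, dphi0, adm_phi0, rfl⟩⟩

lemma rayleigh_lb {β r : ℝ} (hβ : 0 ≤ β) (hr : r ∈ rayleighSet β (-1)) :
    -(β + 1) ^ 2 ≤ r := by
  obtain ⟨φ, dφ, hAdm, rfl⟩ := mem_rayleigh_iff.1 hr
  have hβ1 : (0:ℝ) < β + 1 := by linarith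
  set δ : ℝ := 1 / (β + 1) with hδ
  have hδ0 : 0 < δ := by positivity
  have hδ2 : δ ≤ 2 := by rw [hδ, div_le_iff₀ hβ1]; linarith
  have hB := hAdm.B_le hδ0 hδ2
  have hA := hAdm.A_nonneg
  have hBn := hAdm.B_nonneg
  have hδβ : δ * (β + 1) = 1 := by rw [hδ]; field_simp
  have h1δ : 1 / δ = β + 1 := by rw [hδ, one_div_one_div]
  have h1 : β * rsB φ ≤ β * (δ * rsA dφ + 1 / δ) := mul_le_mul_of_nonneg_left hB hβ
  rw [h1δ] at h1
  have hbd : β * δ ≤ 1 := by nlinarith [hδβ, hδ0]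
  have key : 0 ≤ rsA dφ * (1 - β * δ) := mul_nonneg hA (by linarith)
  nlinarith [h1, key, hβ]

lemma rayleigh_bddBelow {β : ℝ} (hβ : 0 ≤ β) : BddBelow (rayleighSet β (-1)) :=
  ⟨-(β + 1) ^ 2, fun _ hr => rayleigh_lb hβ hr⟩

lemma lambda1_le {β : ℝ} (hβ : 0 ≤ β) {φ dφ : ℝ → ℝ} (hAdm : Adm φ dφ) :
    lambda1 β (-1) ≤ rsA dφ - β * rsB φ :=
  csInf_le (rayleigh_bddBelow hβ) (mem_rayleigh_iff.2 ⟨φ, dφ, hAdm, rfl⟩)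

lemma lambda1_lb {β : ℝ} (hβ : 0 ≤ β) : -(β + 1) ^ 2 ≤ lambda1 β (-1) :=
  le_csInf (rayleigh_nonempty β) fun _ hr => rayleigh_lb hβ hr

lemma lambda1_anti {β₁ β₂ : ℝ} (h1 : 0 ≤ β₁) (h12 : β₁ ≤ β₂) :
    lambda1 β₂ (-1) ≤ lambda1 β₁ (-1) := by
  refine le_csInf (rayleigh_nonempty β₁) fun r hr => ?_
  obtain ⟨φ, dφ, hAdm, rfl⟩ := mem_rayleigh_iff.1 hr
  have h2 : lambda1 β₂ (-1) ≤ rsA dφ - β₂ * rsB φ := lambda1_le (h1.trans h12) hAdm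
  have hBn := hAdm.B_nonneg
  nlinarith [h2]


set_option maxHeartbeats 2000000 in
/-- `β ↦ λ₁(β,-1)` is continuous on `[0,∞)`. -/
theorem lambda1_continuousOn_beta :
    ContinuousOn (fun β => lambda1 β (-1)) (Set.Ici 0) := by
  intro β₀ hβ₀
  have hβ₀0 : (0:ℝ) ≤ β₀ := hβ₀
  set M : ℝ := β₀ + 1 with hM
  have hM1 : (1:ℝ) ≤ M := by simp [hM]; linarith
  have hβ₀M : β₀ < M := by rw [hM]; linarith
  clear_value M
  have hM10 : (0:ℝ) < M + 1 := by linarith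
  set δ : ℝ := 1 / (2 * (M + 1)) with hδ
  have hδ0 : 0 < δ := by positivity
  have hδ2 : δ ≤ 2 := by rw [hδ, div_le_iff₀ (by linarith : (0:ℝ) < 2 * (M + 1))]; nlinarith
  have hδinv : δ * (2 * (M + 1)) = 1 := by rw [hδ]; field_simp
  have h1δ : 1 / δ = 2 * (M + 1) := by rw [hδ, one_div_one_div]
  clear_value δ
  set G : ℝ := max (rsA dphi0) ((M + 1) ^ 2) with hG
  have hG0 : 0 ≤ G := le_trans adm_phi0.A_nonneg (le_max_left _ _)
  have hGA : rsA dphi0 ≤ G := le_max_left _ _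
  have hGM : (M + 1) ^ 2 ≤ G := le_max_right _ _
  clear_value G
  set K : ℝ := 2 * δ * G + 2 * M + 1 / δ with hK
  clear_value K
  have hK0 : 0 ≤ K := by
    have h1' : 0 < 1 / δ := by positivity
    rw [hK]
    nlinarith [mul_nonneg (mul_nonneg (by norm_num : (0:ℝ) ≤ 2) hδ0.le) hG0]
  -- uniform bounds for lambda1 on [0, M]
  have hup : ∀ β, 0 ≤ β → lambda1 β (-1) ≤ G := by
    intro β hβ
    have h := lambda1_le hβ adm_phi0
    have hBn := adm_phi0.B_nonneg
    have : lambda1 β (-1) ≤ rsA dphi0 := by nlinarith [h, mul_nonneg hβ hBn]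
    exact this.trans hGA
  have hlo : ∀ β, 0 ≤ β → β ≤ M → -G ≤ lambda1 β (-1) := by
    intro β hβ hβM
    have h := lambda1_lb hβ
    have : (β + 1) ^ 2 ≤ (M + 1) ^ 2 := by nlinarith
    nlinarith [h, hGM]
  -- one-sided Lipschitz estimate
  have hlip : ∀ β₁ β₂, 0 ≤ β₁ → β₁ ≤ β₂ → β₂ ≤ M →
      lambda1 β₁ (-1) - K * (β₂ - β₁) ≤ lambda1 β₂ (-1) := by
    intro β₁ β₂ h1 h12 h2M
    set ε : ℝ := β₂ - β₁ with hε
    clear_value ε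
    have hε0 : 0 ≤ ε := by rw [hε]; linarith
    have hεM : ε ≤ M := by rw [hε]; linarith
    have hβ₁M : β₁ ≤ M := le_trans h12 h2M
    refine le_csInf (rayleigh_nonempty β₂) fun r hr => ?_
    obtain ⟨φ, dφ, hAdm, rfl⟩ := mem_rayleigh_iff.1 hr
    set A : ℝ := rsA dφ with hA'
    clear_value A
    set B : ℝ := rsB φ with hB'
    clear_value B
    have hA : 0 ≤ A := hA'.symm ▸ hAdm.A_nonneg
    have hBn : 0 ≤ B := hB'.symm ▸ hAdm.B_nonneg
    have hB : B ≤ δ * A + 1 / δ := by rw [hA', hB']; exact hAdm.B_le hδ0 hδ2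
    have hq1 : lambda1 β₁ (-1) ≤ A - β₁ * B := by rw [hA', hB']; exact lambda1_le h1 hAdm
    have hgG : lambda1 β₁ (-1) ≤ G := hup β₁ h1
    -- β₁ * δ ≤ 1/2 and 2 * ε * δ ≤ 1
    have h3 : β₁ * δ ≤ 1 / 2 := by nlinarith [hδinv, hδ0, hβ₁M]
    have h2εδ : 2 * ε * δ ≤ 1 := by nlinarith [hδinv, hδ0, hεM]
    -- A ≤ 2 * (A - β₁ * B) + 2 * β₁ * (1/δ)
    have h1' : β₁ * B ≤ β₁ * (δ * A + 1 / δ) := mul_le_mul_of_nonneg_left hB h1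
    have h4 : A ≤ 2 * (A - β₁ * B) + 2 * β₁ * (1 / δ) := by
      nlinarith [h1', mul_le_mul_of_nonneg_left h3 hA]
    -- ε * B bound
    have h2' : ε * B ≤ ε * (δ * A + 1 / δ) := mul_le_mul_of_nonneg_left hB hε0
    have p1 : (ε * δ) * A ≤ (ε * δ) * (2 * (A - β₁ * B) + 2 * β₁ * (1 / δ)) :=
      mul_le_mul_of_nonneg_left h4 (mul_nonneg hε0 hδ0.le)
    have hδδ : δ * (1 / δ) = 1 := by field_simp
    have p2 : 0 ≤ (1 - 2 * ε * δ) * ((A - β₁ * B) - lambda1 β₁ (-1)) :=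
      mul_nonneg (by linarith) (by linarith)
    have p3 : (2 * ε * δ) * lambda1 β₁ (-1) ≤ (2 * ε * δ) * G :=
      mul_le_mul_of_nonneg_left hgG (by positivity)
    have p5 : ε * β₁ ≤ ε * M := mul_le_mul_of_nonneg_left hβ₁M hε0
    have hq : ε * β₁ * (δ * (1 / δ)) = ε * β₁ := by rw [hδδ]; ring
    have hεB : β₂ * B = β₁ * B + ε * B := by rw [hε]; ring
    rw [hK]
    linarith [h2', p1, p2, p3, p5, hq, hεB]
  -- conclude continuity at β₀ within Ici 0
  have hcont : ContinuousOn (fun β => lambda1 β (-1)) (Icc 0 M) := by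
    have hlipOn : LipschitzOnWith (Real.toNNReal K) (fun β => lambda1 β (-1)) (Icc 0 M) := by
      rw [lipschitzOnWith_iff_dist_le_mul]
      intro x hx y hy
      rw [Real.dist_eq, Real.dist_eq, Real.coe_toNNReal K hK0]
      rcases le_total x y with hxy | hxy
      · have hm := lambda1_anti hx.1 hxy
        have hl := hlip x y hx.1 hxy hy.2
        rw [abs_of_nonneg (by linarith), abs_of_nonpos (by linarith)]
        linarith [hl]
      · have hm := lambda1_anti hy.1 hxy
        have hl := hlip y x hy.1 hxy hx.2
        rw [abs_of_nonpos (by linarith), abs_of_nonneg (by linarith)]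
        linarith [hl]
    exact hlipOn.continuousOn
  have hmem : Icc (0:ℝ) M ∈ nhdsWithin β₀ (Set.Ici 0) := by
    rw [mem_nhdsWithin]
    refine ⟨Iio M, isOpen_Iio, hβ₀M, ?_⟩
    rintro x ⟨hx1, hx2⟩
    exact ⟨hx2, le_of_lt hx1⟩
  exact (hcont β₀ ⟨hβ₀0, hβ₀M.le⟩).mono_of_mem_nhdsWithin hmem
end

section
/- For any real φ ∈ H₀¹(−1,1) with ‖φ‖_{L²(−1,1)} = 1 and any β ∈ ℝ, the antisymmetric part of the Couette-Rayleigh-Kuo potential satisfies |∫_{2γ}^{1} (β/y)(φ(y)² − φ(−y)²) dy| ≤ (3√2 π |β| / 8) ‖φ'‖²_{L²(−1,1)} for every γ ∈ (0, 1/2). -/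
open MeasureTheory Real Set

lemma cs_sq (h : ℝ → ℝ) (a b : ℝ) (hab : a ≤ b)
    (h1 : IntervalIntegrable h volume a b)
    (h2 : IntervalIntegrable (fun x => h x ^ 2) volume a b) :
    (∫ x in a..b, h x) ^ 2 ≤ (b - a) * ∫ x in a..b, h x ^ 2 := by
  rcases eq_or_lt_of_le hab with rfl | hlt
  · simp
  · set m := b - a with hm
    have hm0 : 0 < m := by simp [hm]; linarith
    set I := ∫ x in a..b, h x with hI
    set c : ℝ := I / m with hc
    have key : 0 ≤ ∫ x in a..b, (h x - c) ^ 2 :=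
      intervalIntegral.integral_nonneg hab (fun x _ => sq_nonneg _)
    have expand : (∫ x in a..b, (h x - c) ^ 2)
        = (∫ x in a..b, h x ^ 2) - 2 * c * I + c ^ 2 * m := by
      have : (fun x => (h x - c) ^ 2) = fun x => h x ^ 2 - 2 * c * h x + c ^ 2 := by
        funext x; ring
      rw [this, intervalIntegral.integral_add (h2.sub ((h1.const_mul (2*c))))
        intervalIntegrable_const, intervalIntegral.integral_sub h2 (h1.const_mul (2*c)),
        intervalIntegral.integral_const_mul, intervalIntegral.integral_const]
      rw [smul_eq_mul]; ring
    rw [expand] at key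
    have hc2 : c * m = I := by rw [hc]; exact div_mul_cancel₀ I (ne_of_gt hm0)
    nlinarith [key, sq_nonneg c]

lemma cs_abs (h : ℝ → ℝ) (a b : ℝ) (hab : a ≤ b)
    (h1 : IntervalIntegrable h volume a b)
    (h2 : IntervalIntegrable (fun x => h x ^ 2) volume a b) :
    |∫ x in a..b, h x| ≤ Real.sqrt (b - a) * Real.sqrt (∫ x in a..b, h x ^ 2) := by
  have h0 : (0:ℝ) ≤ ∫ x in a..b, h x ^ 2 :=
    intervalIntegral.integral_nonneg hab (fun x _ => sq_nonneg _)
  have := cs_sq h a b hab h1 h2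
  calc |∫ x in a..b, h x| = Real.sqrt ((∫ x in a..b, h x) ^ 2) := (Real.sqrt_sq_eq_abs _).symm
    _ ≤ Real.sqrt ((b - a) * ∫ x in a..b, h x ^ 2) := Real.sqrt_le_sqrt this
    _ = Real.sqrt (b - a) * Real.sqrt (∫ x in a..b, h x ^ 2) := Real.sqrt_mul (by linarith) _

lemma sqrt_one_sub_le {y : ℝ} (h0 : 0 ≤ y) (h1 : y ≤ 1) :
    Real.sqrt (1 - y) ≤ 1 - y/2 - y^2/8 := by
  have h2 : 1 - y ≤ (1 - y/2 - y^2/8)^2 := by nlinarith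
  have h3 : (0:ℝ) ≤ 1 - y/2 - y^2/8 := by nlinarith
  have := Real.sqrt_le_sqrt h2
  rwa [Real.sqrt_sq h3] at this

noncomputable def Gfun (y : ℝ) : ℝ := 2*Real.sqrt y - Real.sqrt y^3/3 - Real.sqrt y^5/20

lemma hasDerivAt_G {x : ℝ} (hx : 0 < x) :
    HasDerivAt Gfun ((1 - x/2 - x^2/8)/Real.sqrt x) x := by
  unfold Gfun
  have hsx : (0:ℝ) < Real.sqrt x := Real.sqrt_pos.2 hx
  have hne : Real.sqrt x ≠ 0 := ne_of_gt hsx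
  have e1 : Real.sqrt x ^ 2 = x := Real.sq_sqrt hx.le
  have e2 : Real.sqrt x ^ 4 = x ^ 2 := by rw [show (4:ℕ) = 2*2 by norm_num, pow_mul, e1]
  have hs := Real.hasDerivAt_sqrt (ne_of_gt hx)
  have h1 : HasDerivAt (fun y : ℝ => 2*Real.sqrt y) (2*(1/(2*Real.sqrt x))) x := hs.const_mul 2
  have h3 : HasDerivAt (fun y : ℝ => Real.sqrt y^3)
      ((3:ℕ) * Real.sqrt x^(3-1) * (1/(2*Real.sqrt x))) x := hs.pow 3
  have h5 : HasDerivAt (fun y : ℝ => Real.sqrt y^5)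
      ((5:ℕ) * Real.sqrt x^(5-1) * (1/(2*Real.sqrt x))) x := hs.pow 5
  have hcomb := (h1.sub (h3.div_const 3)).sub (h5.div_const 20)
  refine hcomb.congr_deriv ?_
  symm
  norm_num [e1, e2]
  field_simp
  ring


set_option maxHeartbeats 1600000 in
/-- Estimate of the antisymmetric part of the Couette Rayleigh–Kuo potential:
for real `φ ∈ H₀¹(-1,1)` with `‖φ‖_{L²} = 1`, any `β ∈ ℝ` and `γ ∈ (0,1/2)`,
`|∫_{2γ}^1 (β/y)(φ(y)² - φ(-y)²) dy| ≤ (3√2π|β|/8) ‖φ'‖²_{L²(-1,1)}`. -/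
theorem antisymmetric_potential_estimate (β γ : ℝ) (hγ : γ ∈ Set.Ioo (0:ℝ) (1/2))
    (φ dφ : ℝ → ℝ)
    (hderiv : ∀ y, HasDerivAt φ (dφ y) y)
    (hm1 : φ (-1) = 0) (hp1 : φ 1 = 0)
    (hint : IntervalIntegrable (fun y => dφ y ^ 2) volume (-1) 1)
    (hnorm : (∫ y in (-1:ℝ)..1, φ y ^ 2) = 1) :
    |∫ y in (2*γ)..1, β / y * (φ y ^ 2 - φ (-y) ^ 2)| ≤
      3 * Real.sqrt 2 * π * |β| / 8 * ∫ y in (-1:ℝ)..1, dφ y ^ 2 := by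
  obtain ⟨hγ0, hγ2⟩ := hγ
  set c : ℝ := 2*γ with hcdef
  have hc0 : 0 < c := by positivity
  have hc1 : c < 1 := by rw [hcdef]; linarith
  set D2 : ℝ := ∫ y in (-1:ℝ)..1, dφ y ^ 2 with hD2def
  have hD20 : 0 ≤ D2 := intervalIntegral.integral_nonneg (by norm_num) (fun x _ => sq_nonneg _)
  have hφc : Continuous φ := by
    rw [continuous_iff_continuousAt]; exact fun y => (hderiv y).continuousAt
  have hmeas : Measurable dφ := by
    have hd : dφ = deriv φ := funext fun y => ((hderiv y).deriv).symm
    rw [hd]; exact measurable_deriv φ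
  have hsq : ∀ a b : ℝ, -1 ≤ a → a ≤ 1 → -1 ≤ b → b ≤ 1 →
      IntervalIntegrable (fun x => dφ x ^ 2) volume a b := by
    intro a b ha1 ha2 hb1 hb2
    refine hint.mono_set (Set.uIcc_subset_uIcc ?_ ?_)
    · exact Set.mem_uIcc.2 (Or.inl ⟨ha1, ha2⟩)
    · exact Set.mem_uIcc.2 (Or.inl ⟨hb1, hb2⟩)
  have hdint : ∀ a b : ℝ, -1 ≤ a → a ≤ 1 → -1 ≤ b → b ≤ 1 →
      IntervalIntegrable dφ volume a b := by
    intro a b ha1 ha2 hb1 hb2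
    refine IntervalIntegrable.mono_fun'
      (g := fun x => (1 + dφ x ^ 2)/2)
      ((intervalIntegrable_const.add (hsq a b ha1 ha2 hb1 hb2)).div_const 2)
      hmeas.aestronglyMeasurable ?_
    filter_upwards with x
    rw [Real.norm_eq_abs]
    nlinarith [sq_nonneg (|dφ x| - 1), sq_abs (dφ x), abs_nonneg (dφ x)]
  have hftc : ∀ a b : ℝ, -1 ≤ a → a ≤ 1 → -1 ≤ b → b ≤ 1 →
      (∫ x in a..b, dφ x) = φ b - φ a := fun a b ha1 ha2 hb1 hb2 =>
    intervalIntegral.integral_eq_sub_of_hasDerivAt (fun x _ => hderiv x)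
      (hdint a b ha1 ha2 hb1 hb2)
  -- pointwise bound
  have key : ∀ y ∈ Set.Icc c 1, |β / y * (φ y ^ 2 - φ (-y) ^ 2)| ≤
      |β| * D2 * ((1 - y/2 - y^2/8)/Real.sqrt y) := by
    rintro y ⟨hyc, hy1⟩
    have hy0 : 0 < y := lt_of_lt_of_le hc0 hyc
    have h1y : -1 ≤ -y := by linarith
    have h2y : -y ≤ 1 := by linarith
    have h3y : -1 ≤ y := by linarith
    set p := Real.sqrt (∫ x in (-y)..y, dφ x ^ 2) with hpd
    set q := Real.sqrt (∫ x in y..1, dφ x ^ 2) with hqd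
    set r := Real.sqrt (∫ x in (-1:ℝ)..(-y), dφ x ^ 2) with hrd
    have hp0 : 0 ≤ p := Real.sqrt_nonneg _
    have hq0 : 0 ≤ q := Real.sqrt_nonneg _
    have hr0 : 0 ≤ r := Real.sqrt_nonneg _
    have hp2 : p^2 = ∫ x in (-y)..y, dφ x ^ 2 :=
      Real.sq_sqrt (intervalIntegral.integral_nonneg (by linarith) (fun x _ => sq_nonneg _))
    have hq2 : q^2 = ∫ x in y..1, dφ x ^ 2 :=
      Real.sq_sqrt (intervalIntegral.integral_nonneg hy1 (fun x _ => sq_nonneg _))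
    have hr2 : r^2 = ∫ x in (-1:ℝ)..(-y), dφ x ^ 2 :=
      Real.sq_sqrt (intervalIntegral.integral_nonneg h1y (fun x _ => sq_nonneg _))
    have hA : (∫ x in (-1:ℝ)..(-y), dφ x ^ 2) + (∫ x in (-y)..y, dφ x ^ 2)
        = ∫ x in (-1:ℝ)..y, dφ x ^ 2 :=
      intervalIntegral.integral_add_adjacent_intervals
        (hsq (-1) (-y) (by norm_num) (by norm_num) h1y h2y)
        (hsq (-y) y h1y h2y h3y hy1)
    have hB : (∫ x in (-1:ℝ)..y, dφ x ^ 2) + (∫ x in y..1, dφ x ^ 2) = D2 :=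
      intervalIntegral.integral_add_adjacent_intervals
        (hsq (-1) y (by norm_num) (by norm_num) h3y hy1)
        (hsq y 1 h3y hy1 (by norm_num) (by norm_num))
    have hsumD : r^2 + p^2 + q^2 = D2 := by rw [hp2, hq2, hr2]; linarith
    have hdiff : |φ y - φ (-y)| ≤ Real.sqrt (2*y) * p := by
      have h := cs_abs dφ (-y) y (by linarith) (hdint (-y) y h1y h2y h3y hy1)
        (hsq (-y) y h1y h2y h3y hy1)
      rw [hftc (-y) y h1y h2y h3y hy1, show y - -y = 2*y by ring] at h
      exact h
    have hqb : |φ y| ≤ Real.sqrt (1-y) * q := by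
      have h := cs_abs dφ y 1 hy1 (hdint y 1 h3y hy1 (by norm_num) (by norm_num))
        (hsq y 1 h3y hy1 (by norm_num) (by norm_num))
      rw [hftc y 1 h3y hy1 (by norm_num) (by norm_num), hp1, zero_sub, abs_neg] at h
      exact h
    have hrb : |φ (-y)| ≤ Real.sqrt (1-y) * r := by
      have h := cs_abs dφ (-1) (-y) (by linarith) (hdint (-1) (-y) (by norm_num) (by norm_num) h1y h2y)
        (hsq (-1) (-y) (by norm_num) (by norm_num) h1y h2y)
      rw [hftc (-1) (-y) (by norm_num) (by norm_num) h1y h2y, hm1, sub_zero,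
        show -y - -1 = 1 - y by ring] at h
      exact h
    have hprs : p * (q + r) ≤ Real.sqrt 2 / 2 * D2 := by
      have h2 : Real.sqrt 2 * Real.sqrt 2 = 2 := Real.mul_self_sqrt (by norm_num)
      have e2 : (Real.sqrt 2 * p)^2 = 2 * p^2 := by
        rw [mul_pow, Real.sq_sqrt (by norm_num : (0:ℝ) ≤ 2)]
      have e0 : Real.sqrt 2 * p * (q + r) ≤ p^2 + q^2 + r^2 := by
        nlinarith [sq_nonneg (Real.sqrt 2 * p - (q + r)), sq_nonneg (q - r), e2]
      have e3 : Real.sqrt 2 / 2 * (Real.sqrt 2 * p * (q + r)) = p * (q + r) := by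
        field_simp
        linear_combination (p * (q + r)) * h2
      calc p * (q + r) = Real.sqrt 2 / 2 * (Real.sqrt 2 * p * (q + r)) := e3.symm
        _ ≤ Real.sqrt 2 / 2 * (p^2 + q^2 + r^2) := by
            apply mul_le_mul_of_nonneg_left e0 (by positivity)
        _ = Real.sqrt 2 / 2 * D2 := by rw [show p^2+q^2+r^2 = r^2+p^2+q^2 by ring, hsumD]
    have hfac : |φ y ^ 2 - φ (-y) ^ 2| ≤ (Real.sqrt (2*y) * p) * (Real.sqrt (1-y) * (q + r)) := by
      have e : φ y ^ 2 - φ (-y) ^ 2 = (φ y - φ (-y)) * (φ y + φ (-y)) := by ring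
      rw [e, abs_mul]
      have hs2 : |φ y + φ (-y)| ≤ Real.sqrt (1-y) * (q+r) := by
        calc |φ y + φ (-y)| ≤ |φ y| + |φ (-y)| := abs_add_le _ _
          _ ≤ Real.sqrt (1-y)*q + Real.sqrt (1-y)*r := add_le_add hqb hrb
          _ = Real.sqrt (1-y) * (q+r) := by ring
      exact mul_le_mul hdiff hs2 (abs_nonneg _) (by positivity)
    have hyy : Real.sqrt y * Real.sqrt y = y := Real.mul_self_sqrt hy0.le
    have h22 : Real.sqrt 2 * Real.sqrt 2 = 2 := Real.mul_self_sqrt (by norm_num)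
    have hsy : (0:ℝ) < Real.sqrt y := Real.sqrt_pos.2 hy0
    calc |β / y * (φ y ^ 2 - φ (-y) ^ 2)|
        = |β| / y * |φ y ^ 2 - φ (-y) ^ 2| := by
          rw [abs_mul, abs_div, abs_of_pos hy0]
      _ ≤ |β| / y * ((Real.sqrt (2*y) * p) * (Real.sqrt (1-y) * (q + r))) := by
          apply mul_le_mul_of_nonneg_left hfac (by positivity)
      _ = |β| / y * (Real.sqrt (2*y) * Real.sqrt (1-y)) * (p * (q+r)) := by ring
      _ ≤ |β| / y * (Real.sqrt (2*y) * Real.sqrt (1-y)) * (Real.sqrt 2 / 2 * D2) := by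
          apply mul_le_mul_of_nonneg_left hprs
          have h1 : (0:ℝ) ≤ Real.sqrt (2*y) := Real.sqrt_nonneg _
          have h2 : (0:ℝ) ≤ Real.sqrt (1-y) := Real.sqrt_nonneg _
          positivity
      _ = |β| * D2 * (Real.sqrt (1-y) / Real.sqrt y) := by
          rw [Real.sqrt_mul (by norm_num : (0:ℝ) ≤ 2) y]
          field_simp
          linear_combination (|β| * D2 * Real.sqrt (1-y) * Real.sqrt y * Real.sqrt y) * h22
            + 2 * (|β| * D2 * Real.sqrt (1-y)) * hyy
      _ ≤ |β| * D2 * ((1 - y/2 - y^2/8)/Real.sqrt y) := by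
          apply mul_le_mul_of_nonneg_left _ (by positivity)
          exact (div_le_div_iff_of_pos_right hsy).2 (sqrt_one_sub_le hy0.le hy1)
  -- continuity / integrability on [c,1]
  have hcont_g : ContinuousOn (fun y : ℝ => (1 - y/2 - y^2/8)/Real.sqrt y) (Set.uIcc c 1) := by
    apply ContinuousOn.div
    · fun_prop
    · exact Real.continuous_sqrt.continuousOn
    · intro x hx
      rw [Set.uIcc_of_le hc1.le] at hx
      have : 0 < x := lt_of_lt_of_le hc0 hx.1
      positivity
  have hint_g : IntervalIntegrable (fun y : ℝ => (1 - y/2 - y^2/8)/Real.sqrt y) volume c 1 :=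
    hcont_g.intervalIntegrable
  have hcont_f : ContinuousOn (fun y : ℝ => β / y * (φ y ^ 2 - φ (-y) ^ 2)) (Set.uIcc c 1) := by
    apply ContinuousOn.mul
    · apply ContinuousOn.div continuousOn_const continuousOn_id
      intro x hx
      rw [Set.uIcc_of_le hc1.le] at hx
      exact ne_of_gt (lt_of_lt_of_le hc0 hx.1)
    · exact (((hφc.pow 2).sub ((hφc.comp continuous_neg).pow 2))).continuousOn
  have hint_f : IntervalIntegrable (fun y : ℝ => β / y * (φ y ^ 2 - φ (-y) ^ 2)) volume c 1 :=
    hcont_f.intervalIntegrable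
  have hint_af : IntervalIntegrable (fun y : ℝ => |β / y * (φ y ^ 2 - φ (-y) ^ 2)|) volume c 1 :=
    hcont_f.abs.intervalIntegrable
  -- FTC for the comparison integral
  have hG : ∀ x ∈ Set.uIcc c 1, HasDerivAt Gfun ((1 - x/2 - x^2/8)/Real.sqrt x) x := by
    intro x hx
    rw [Set.uIcc_of_le hc1.le] at hx
    exact hasDerivAt_G (lt_of_lt_of_le hc0 hx.1)
  have hftc2 : (∫ y in c..1, (1 - y/2 - y^2/8)/Real.sqrt y) = Gfun 1 - Gfun c :=
    intervalIntegral.integral_eq_sub_of_hasDerivAt hG hint_g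
  have hG1 : Gfun 1 = 97/60 := by simp [Gfun, Real.sqrt_one]; norm_num
  have hGc : 0 ≤ Gfun c := by
    have hsc0 : 0 ≤ Real.sqrt c := Real.sqrt_nonneg c
    have hsc1 : Real.sqrt c ≤ 1 := by
      rw [show (1:ℝ) = Real.sqrt 1 by simp]
      exact Real.sqrt_le_sqrt hc1.le
    have e3 : Real.sqrt c ^ 3 ≤ Real.sqrt c := by
      calc Real.sqrt c ^ 3 ≤ Real.sqrt c ^ 1 := pow_le_pow_of_le_one hsc0 hsc1 (by norm_num)
        _ = Real.sqrt c := pow_one _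
    have e5 : Real.sqrt c ^ 5 ≤ Real.sqrt c := by
      calc Real.sqrt c ^ 5 ≤ Real.sqrt c ^ 1 := pow_le_pow_of_le_one hsc0 hsc1 (by norm_num)
        _ = Real.sqrt c := pow_one _
    simp only [Gfun]
    linarith [e3, e5, hsc0]
  have hgle : (∫ y in c..1, (1 - y/2 - y^2/8)/Real.sqrt y) ≤ 97/60 := by
    rw [hftc2, hG1]; linarith
  have hsqrt2 : (1.414:ℝ) ≤ Real.sqrt 2 := by
    have h2 : Real.sqrt 2 * Real.sqrt 2 = 2 := Real.mul_self_sqrt (by norm_num)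
    nlinarith [Real.sqrt_nonneg 2]
  have hcmp : (97:ℝ)/60 ≤ 3 * Real.sqrt 2 * π / 8 := by
    nlinarith [Real.pi_gt_d6, hsqrt2, Real.sqrt_nonneg 2, Real.pi_pos]
  calc |∫ y in c..1, β / y * (φ y ^ 2 - φ (-y) ^ 2)|
      ≤ ∫ y in c..1, |β / y * (φ y ^ 2 - φ (-y) ^ 2)| :=
        intervalIntegral.abs_integral_le_integral_abs hc1.le
    _ ≤ ∫ y in c..1, |β| * D2 * ((1 - y/2 - y^2/8)/Real.sqrt y) := by
        apply intervalIntegral.integral_mono_on hc1.le hint_af (hint_g.const_mul (|β| * D2))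
        exact key
    _ = |β| * D2 * ∫ y in c..1, (1 - y/2 - y^2/8)/Real.sqrt y :=
        intervalIntegral.integral_const_mul _ _
    _ ≤ |β| * D2 * (97/60) := by
        apply mul_le_mul_of_nonneg_left hgle (by positivity)
    _ ≤ |β| * D2 * (3 * Real.sqrt 2 * π / 8) := by
        apply mul_le_mul_of_nonneg_left hcmp (by positivity)
    _ = 3 * Real.sqrt 2 * π * |β| / 8 * D2 := by ring
end
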